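/- Completeness of mb*: for any set Γ of mb*-formulas and any mb*-formula φ, if Γ ⊨ φ (every mb*-valuation assigning 1 to all members of Γ assigns 1 to φ), then Γ ⊢ φ in mb*. -/

import Mathlib

/-- Formulas of the logic mb*, built from countably many propositional
variables via ∧ (`conj`), ∨ (`disj`), → (`impl`), ¬ (`neg`) and ★ (`star`). -/
inductive MbF : Type
  | var : ℕ → MbF
  | conj : MbF → MbF → MbF
  | disj : MbF → MbF → MbF
  | impl : MbF → MbF → MbF
  | neg : MbF → MbF
  | star : MbF → MbF

/-- Axiom schemas of the Hilbert-style presentation of mb*. -/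
inductive MbAxiom : MbF → Prop
  | ax1 (α β : MbF) : MbAxiom (.impl α (.impl β α))
  | ax2 (α β γ : MbF) :
      MbAxiom (.impl (.impl α β) (.impl (.impl α (.impl β γ)) (.impl α γ)))
  | ax3 (α β : MbF) : MbAxiom (.impl α (.impl β (.conj α β)))
  | ax4 (α β : MbF) : MbAxiom (.impl (.conj α β) α)
  | ax5 (α β : MbF) : MbAxiom (.impl (.conj α β) β)
  | ax6 (α β : MbF) : MbAxiom (.impl α (.disj α β))
  | ax7 (α β : MbF) : MbAxiom (.impl β (.disj α β))
  | ax8 (α β γ : MbF) :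
      MbAxiom (.impl (.impl α γ) (.impl (.impl β γ) (.impl (.disj α β) γ)))
  | ax9 (α β : MbF) : MbAxiom (.disj α (.impl α β))
  | ax10 (α β : MbF) : MbAxiom (.impl α (.impl (.neg α) β))
  | ax11 (α : MbF) : MbAxiom (.disj α (.disj (.neg α) (.star α)))

/-- Derivability in mb*: `MbDeriv Γ φ` means Γ ⊢ φ, i.e. φ has a derivation
from Γ using axiom instances, members of Γ, and modus ponens. -/
inductive MbDeriv (Γ : Set MbF) : MbF → Prop
  | ax {φ : MbF} : MbAxiom φ → MbDeriv Γ φ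
  | hyp {φ : MbF} : φ ∈ Γ → MbDeriv Γ φ
  | mp {φ ψ : MbF} : MbDeriv Γ (.impl φ ψ) → MbDeriv Γ φ → MbDeriv Γ ψ

/-- An mb*-valuation: a two-valued map satisfying the semantic clauses of mb*. -/
def IsMbVal (v : MbF → Fin 2) : Prop :=
  (∀ α β : MbF, v (.disj α β) = 1 ↔ v α = 1 ∨ v β = 1) ∧
  (∀ α β : MbF, v (.conj α β) = 1 ↔ v α = 1 ∧ v β = 1) ∧
  (∀ α β : MbF, v (.impl α β) = 1 ↔ v α = 0 ∨ v β = 1) ∧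
  (∀ α : MbF, v α = 1 → v (.neg α) = 0) ∧
  (∀ α : MbF, v α = 0 → v (.neg α) = 0 → v (.star α) = 1)

/-- An mb*-probability function: a `[0,1]`-valued function on formulas
satisfying tautologicity, antitautologicity, comparison and finite additivity. -/
def IsMbProb (P : MbF → ℝ) : Prop :=
  (∀ φ : MbF, P φ ∈ Set.Icc (0 : ℝ) 1) ∧
  (∀ φ : MbF, MbDeriv ∅ φ → P φ = 1) ∧
  (∀ φ : MbF, (∀ ψ : MbF, MbDeriv {φ} ψ) → P φ = 0) ∧
  (∀ φ ψ : MbF, MbDeriv {ψ} φ → P ψ ≤ P φ) ∧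
  (∀ φ ψ : MbF, P (.disj φ ψ) = P φ + P ψ - P (.conj φ ψ))

namespace MbAux

lemma mono {Γ Γ' : Set MbF} {ψ : MbF} (h : MbDeriv Γ ψ) (hs : Γ ⊆ Γ') : MbDeriv Γ' ψ := by
  induction h with
  | ax a => exact .ax a
  | hyp m => exact .hyp (hs m)
  | mp _ _ ih1 ih2 => exact .mp ih1 ih2

lemma id_deriv (Γ : Set MbF) (α : MbF) : MbDeriv Γ (.impl α α) :=
  .mp (.mp (.ax (.ax2 α (.impl α α) α)) (.ax (.ax1 α α))) (.ax (.ax1 α (.impl α α)))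

lemma deduction {Γ : Set MbF} {ψ χ : MbF} (h : MbDeriv (insert ψ Γ) χ) :
    MbDeriv Γ (.impl ψ χ) := by
  induction h with
  | ax a => exact .mp (.ax (.ax1 _ ψ)) (.ax a)
  | hyp m =>
    rcases Set.mem_insert_iff.mp m with rfl | m
    · exact id_deriv Γ _
    · exact .mp (.ax (.ax1 _ ψ)) (.hyp m)
  | mp h1 h2 ih1 ih2 => exact .mp (.mp (.ax (.ax2 ψ _ _)) ih2) ih1

lemma finite_sub {Γ : Set MbF} {ψ : MbF} (h : MbDeriv Γ ψ) :
    ∃ s : Set MbF, s.Finite ∧ s ⊆ Γ ∧ MbDeriv s ψ := by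
  induction h with
  | ax a => exact ⟨∅, Set.finite_empty, Set.empty_subset _, .ax a⟩
  | @hyp χ m => exact ⟨{χ}, Set.finite_singleton _, Set.singleton_subset_iff.mpr m, .hyp rfl⟩
  | mp _ _ ih1 ih2 =>
    obtain ⟨s1, f1, sub1, d1⟩ := ih1
    obtain ⟨s2, f2, sub2, d2⟩ := ih2
    exact ⟨s1 ∪ s2, f1.union f2, Set.union_subset sub1 sub2,
      .mp (mono d1 Set.subset_union_left) (mono d2 Set.subset_union_right)⟩

lemma chain_dir {c : Set (Set MbF)} (hc : IsChain (· ⊆ ·) c) (hne : c.Nonempty)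
    {s : Set MbF} (hf : s.Finite) : s ⊆ ⋃₀ c → ∃ t ∈ c, s ⊆ t := by
  refine Set.Finite.induction_on (motive := fun s _ => s ⊆ ⋃₀ c → ∃ t ∈ c, s ⊆ t) s hf ?_ ?_
  · intro _; obtain ⟨t, ht⟩ := hne; exact ⟨t, ht, Set.empty_subset _⟩
  · intro a s' _ _ ih hsub
    obtain ⟨t, htc, hst⟩ := ih ((Set.subset_insert a s').trans hsub)
    obtain ⟨u, huc, hau⟩ := Set.mem_sUnion.mp (hsub (Set.mem_insert a s'))
    rcases hc.total htc huc with htu | hut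
    · exact ⟨u, huc, Set.insert_subset hau (hst.trans htu)⟩
    · exact ⟨t, htc, Set.insert_subset (hut hau) hst⟩

end MbAux

/-- Completeness of mb*. -/
theorem mb_completeness (Γ : Set MbF) (φ : MbF)
    (h : ∀ v : MbF → Fin 2, IsMbVal v → (∀ ψ ∈ Γ, v ψ = 1) → v φ = 1) :
    MbDeriv Γ φ := by
  classical
  by_contra hnd
  set S : Set (Set MbF) := {Δ | Γ ⊆ Δ ∧ ¬ MbDeriv Δ φ} with hS
  have hzorn : ∀ c ⊆ S, IsChain (· ⊆ ·) c → c.Nonempty →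
      ∃ ub ∈ S, ∀ s ∈ c, s ⊆ ub := by
    intro c hcS hchain hcne
    refine ⟨⋃₀ c, ⟨?_, ?_⟩, fun s hs => Set.subset_sUnion_of_mem hs⟩
    · obtain ⟨t, ht⟩ := hcne
      exact (hcS ht).1.trans (Set.subset_sUnion_of_mem ht)
    · intro hder
      obtain ⟨s, hsf, hss, hsd⟩ := MbAux.finite_sub hder
      obtain ⟨t, htc, hst⟩ := MbAux.chain_dir hchain hcne hsf hss
      exact (hcS htc).2 (MbAux.mono hsd hst)
  obtain ⟨Δ, hΓΔ, hmax⟩ := zorn_subset_nonempty S hzorn Γ ⟨Set.Subset.rfl, hnd⟩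
  have hΔS : Δ ∈ S := hmax.1
  have hΔnd : ¬ MbDeriv Δ φ := hΔS.2
  -- if ψ ∉ Δ then insert ψ Δ derives φ
  have hout : ∀ ψ : MbF, ψ ∉ Δ → MbDeriv (insert ψ Δ) φ := by
    intro ψ hψ
    by_contra hnd'
    have hmem : insert ψ Δ ∈ S := ⟨(hΓΔ.trans (Set.subset_insert _ _)), hnd'⟩
    have hsub := hmax.2 hmem (Set.subset_insert _ _)
    exact hψ (hsub (Set.mem_insert _ _))
  -- closure
  have hcl : ∀ ψ : MbF, MbDeriv Δ ψ → ψ ∈ Δ := by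
    intro ψ hd
    by_contra hψ
    exact hΔnd (.mp (MbAux.deduction (hout ψ hψ)) hd)
  have hprime : ∀ α β : MbF, MbF.disj α β ∈ Δ → α ∈ Δ ∨ β ∈ Δ := by
    intro α β hd
    by_contra hc
    push_neg at hc
    have hαφ := MbAux.deduction (hout α hc.1)
    have hβφ := MbAux.deduction (hout β hc.2)
    exact hΔnd (.mp (.mp (.mp (.ax (.ax8 α β φ)) hαφ) hβφ) (.hyp hd))
  set v : MbF → Fin 2 := fun χ => if χ ∈ Δ then 1 else 0 with hv
  have hv1 : ∀ χ, v χ = 1 ↔ χ ∈ Δ := by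
    intro χ; simp only [hv]; split <;> simp_all
  have hv0 : ∀ χ, v χ = 0 ↔ χ ∉ Δ := by
    intro χ; simp only [hv]; split <;> simp_all
  have hval : IsMbVal v := by
    refine ⟨?_, ?_, ?_, ?_, ?_⟩
    · intro α β
      simp only [hv1]
      constructor
      · exact hprime α β
      · rintro (hα | hβ)
        · exact hcl _ (.mp (.ax (.ax6 α β)) (.hyp hα))
        · exact hcl _ (.mp (.ax (.ax7 α β)) (.hyp hβ))
    · intro α β
      simp only [hv1]
      constructor
      · intro hd
        exact ⟨hcl _ (.mp (.ax (.ax4 α β)) (.hyp hd)), hcl _ (.mp (.ax (.ax5 α β)) (.hyp hd))⟩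
      · rintro ⟨hα, hβ⟩
        exact hcl _ (.mp (.mp (.ax (.ax3 α β)) (.hyp hα)) (.hyp hβ))
    · intro α β
      simp only [hv1, hv0]
      constructor
      · intro hd
        by_cases hα : α ∈ Δ
        · exact Or.inr (hcl _ (.mp (.hyp hd) (.hyp hα)))
        · exact Or.inl hα
      · rintro (hα | hβ)
        · have := hcl _ (.ax (.ax9 α β))
          rcases hprime _ _ this with h' | h'
          · exact absurd h' hα
          · exact h'
        · exact hcl _ (.mp (.ax (.ax1 β α)) (.hyp hβ))
    · intro α hα
      rw [hv1] at hα
      rw [hv0]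
      intro hn
      exact hΔnd (.mp (.mp (.ax (.ax10 α φ)) (.hyp hα)) (.hyp hn))
    · intro α h0 hn0
      rw [hv0] at h0 hn0
      rw [hv1]
      have := hcl _ (.ax (.ax11 α))
      rcases hprime _ _ this with h' | h'
      · exact absurd h' h0
      rcases hprime _ _ h' with h' | h'
      · exact absurd h' hn0
      · exact h'
  have := h v hval (fun ψ hψ => (hv1 ψ).mpr (hΓΔ hψ))
  exact hΔnd (.hyp ((hv1 φ).mp this))
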